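/- Let ρ be a density matrix on ℂ^{d₁}⊗ℂ^{d₂} and T a source-operator of type T₁₂₂ for ρ with T ≠ 0, and set σ_T = tr^{(1)}[|T|] / ‖T‖₁, a density matrix on ℂ^{d₂}⊗ℂ^{d₂}. Then for all Hermitian matrices W₁ on ℂ^{d₁} and B₁, B₂ on ℂ^{d₂} with operator norms at most 1: |tr[ρ(W₁⊗B₁)] − tr[ρ(W₁⊗B₂)]| ≤ ‖T‖₁ · (1 − tr[σ_T (B₁⊗B₂)]). -/

import Mathlib

open Matrix
open scoped Kronecker ComplexOrder

namespace BellPaper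

variable {α β γ : Type*} [Fintype α] [Fintype β] [Fintype γ]

/-- Partial trace over the first factor of a threefold tensor product. -/
noncomputable def ptr1 (T : Matrix ((α × β) × γ) ((α × β) × γ) ℂ) :
    Matrix (β × γ) (β × γ) ℂ :=
  fun p q => ∑ i : α, T ((i, p.1), p.2) ((i, q.1), q.2)

/-- Partial trace over the second factor of a threefold tensor product. -/
noncomputable def ptr2 (T : Matrix ((α × β) × γ) ((α × β) × γ) ℂ) :
    Matrix (α × γ) (α × γ) ℂ :=
  fun p q => ∑ j : β, T ((p.1, j), p.2) ((q.1, j), q.2)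

/-- Partial trace over the third factor of a threefold tensor product. -/
noncomputable def ptr3 (T : Matrix ((α × β) × γ) ((α × β) × γ) ℂ) :
    Matrix (α × β) (α × β) ℂ :=
  fun p q => ∑ k : γ, T (p, k) (q, k)

/-- Partial trace over the second factor of a twofold tensor product. -/
noncomputable def ptrB (M : Matrix (α × β) (α × β) ℂ) : Matrix α α ℂ :=
  fun i i' => ∑ j : β, M (i, j) (i', j)

/-- A density matrix: positive semidefinite with unit trace. -/
def IsDensityMatrix {n : Type*} [Fintype n] (ρ : Matrix n n ℂ) : Prop :=
  ρ.PosSemidef ∧ ρ.trace = 1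

/-- Source-operator of type `T₁₂₂` for a state on ℂ^{d₁}⊗ℂ^{d₂}. -/
def IsSource122 {d₁ d₂ : ℕ} (ρ : Matrix (Fin d₁ × Fin d₂) (Fin d₁ × Fin d₂) ℂ)
    (T : Matrix ((Fin d₁ × Fin d₂) × Fin d₂) ((Fin d₁ × Fin d₂) × Fin d₂) ℂ) : Prop :=
  T.IsHermitian ∧ ptr2 T = ρ ∧ ptr3 T = ρ

/-- Source-operator of type `T₁₁₂` for a state on ℂ^{d₁}⊗ℂ^{d₂}. -/
def IsSource112 {d₁ d₂ : ℕ} (ρ : Matrix (Fin d₁ × Fin d₂) (Fin d₁ × Fin d₂) ℂ)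
    (S : Matrix ((Fin d₁ × Fin d₁) × Fin d₂) ((Fin d₁ × Fin d₁) × Fin d₂) ℂ) : Prop :=
  S.IsHermitian ∧ ptr1 S = ρ ∧ ptr2 S = ρ

/-- A DSO state: a density matrix admitting a positive semidefinite source-operator. -/
def IsDSO {d₁ d₂ : ℕ} (ρ : Matrix (Fin d₁ × Fin d₂) (Fin d₁ × Fin d₂) ℂ) : Prop :=
  IsDensityMatrix ρ ∧
    ((∃ T, T.PosSemidef ∧ IsSource122 ρ T) ∨ (∃ S, S.PosSemidef ∧ IsSource112 ρ S))

/-- A Bell class state: a density matrix admitting a density source-operator with the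
special dilation property (all three partial traces equal the state). -/
def IsBellClass {d : ℕ} (ρ : Matrix (Fin d × Fin d) (Fin d × Fin d) ℂ) : Prop :=
  IsDensityMatrix ρ ∧
    ∃ T : Matrix ((Fin d × Fin d) × Fin d) ((Fin d × Fin d) × Fin d) ℂ,
      T.PosSemidef ∧ ptr1 T = ρ ∧ ptr2 T = ρ ∧ ptr3 T = ρ

/-- The operator (spectral) norm of a matrix acting on a Euclidean space. -/
noncomputable def opNorm {n : Type*} [Fintype n] [DecidableEq n] (W : Matrix n n ℂ) : ℝ :=
  ‖Matrix.toEuclideanCLM (𝕜 := ℂ) W‖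

/-- The swap (permutation) operator `V_d` on ℂ^d ⊗ ℂ^d. -/
noncomputable def swapMat (d : ℕ) : Matrix (Fin d × Fin d) (Fin d × Fin d) ℂ :=
  fun p q => if p.1 = q.2 ∧ p.2 = q.1 then 1 else 0

/-- The Werner state on ℂ^d ⊗ ℂ^d. -/
noncomputable def werner (d : ℕ) : Matrix (Fin d × Fin d) (Fin d × Fin d) ℂ :=
  (((d : ℂ) + 1) / (d : ℂ) ^ 3) • (1 : Matrix (Fin d × Fin d) (Fin d × Fin d) ℂ)
    - ((d : ℂ) ^ 2)⁻¹ • swapMat d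

/-- The triple of indices of a point of the threefold product. -/
def triple {d : ℕ} (p : (Fin d × Fin d) × Fin d) : Fin 3 → Fin d := ![p.1.1, p.1.2, p.2]

/-- The unitary permuting the three tensor factors of ℂ^d ⊗ ℂ^d ⊗ ℂ^d according to π. -/
noncomputable def permMat (d : ℕ) (π : Equiv.Perm (Fin 3)) :
    Matrix ((Fin d × Fin d) × Fin d) ((Fin d × Fin d) × Fin d) ℂ :=
  fun p q => if ∀ i, triple p (π i) = triple q i then 1 else 0

/-- The antisymmetrization projection `Q_d^{(-)}` on ℂ^d ⊗ ℂ^d ⊗ ℂ^d. -/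
noncomputable def antisym (d : ℕ) :
    Matrix ((Fin d × Fin d) × Fin d) ((Fin d × Fin d) × Fin d) ℂ :=
  (6 : ℂ)⁻¹ • ∑ π : Equiv.Perm (Fin 3), (((Equiv.Perm.sign π : ℤ) : ℂ)) • permMat d π

/-- Tensor product of two vectors. -/
def tens {m n : Type*} (u : m → ℂ) (v : n → ℂ) : m × n → ℂ := fun p => u p.1 * v p.2

/-- The rank-one operator |v⟩⟨v|. -/
noncomputable def outer {n : Type*} (v : n → ℂ) : Matrix n n ℂ :=
  Matrix.vecMulVec v (star v)


section AuxLemmas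

lemma sumc3 {ι κ μ M : Type*} [Fintype ι] [Fintype κ] [Fintype μ] [AddCommMonoid M]
    (f : ι → κ → μ → M) :
    ∑ a : ι, ∑ b : κ, ∑ c : μ, f a b c = ∑ c : μ, ∑ a : ι, ∑ b : κ, f a b c :=
  calc ∑ a : ι, ∑ b : κ, ∑ c : μ, f a b c
      = ∑ a : ι, ∑ c : μ, ∑ b : κ, f a b c :=
        Finset.sum_congr rfl fun _ _ => Finset.sum_comm
    _ = ∑ c : μ, ∑ a : ι, ∑ b : κ, f a b c := Finset.sum_comm

lemma sumc4 {ι κ μ ν M : Type*} [Fintype ι] [Fintype κ] [Fintype μ] [Fintype ν] [AddCommMonoid M]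
    (f : ι → κ → μ → ν → M) :
    ∑ a : ι, ∑ b : κ, ∑ c : μ, ∑ d : ν, f a b c d
      = ∑ d : ν, ∑ a : ι, ∑ b : κ, ∑ c : μ, f a b c d :=
  calc ∑ a : ι, ∑ b : κ, ∑ c : μ, ∑ d : ν, f a b c d
      = ∑ a : ι, ∑ d : ν, ∑ b : κ, ∑ c : μ, f a b c d :=
        Finset.sum_congr rfl fun a _ => sumc3 (f a)
    _ = ∑ d : ν, ∑ a : ι, ∑ b : κ, ∑ c : μ, f a b c d := Finset.sum_comm

lemma sumc5 {ι κ μ ν ξ M : Type*} [Fintype ι] [Fintype κ] [Fintype μ] [Fintype ν] [Fintype ξ]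
    [AddCommMonoid M] (f : ι → κ → μ → ν → ξ → M) :
    ∑ a : ι, ∑ b : κ, ∑ c : μ, ∑ d : ν, ∑ e : ξ, f a b c d e
      = ∑ e : ξ, ∑ a : ι, ∑ b : κ, ∑ c : μ, ∑ d : ν, f a b c d e :=
  calc ∑ a : ι, ∑ b : κ, ∑ c : μ, ∑ d : ν, ∑ e : ξ, f a b c d e
      = ∑ a : ι, ∑ e : ξ, ∑ b : κ, ∑ c : μ, ∑ d : ν, f a b c d e :=
        Finset.sum_congr rfl fun a _ => sumc4 (f a)
    _ = ∑ e : ξ, ∑ a : ι, ∑ b : κ, ∑ c : μ, ∑ d : ν, f a b c d e := Finset.sum_comm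

lemma sum_ite_const {ι M : Type*} [AddCommMonoid M] (s : Finset ι) (c : Prop) [Decidable c]
    (f : ι → M) :
    ∑ x ∈ s, (if c then f x else 0) = if c then ∑ x ∈ s, f x else 0 := by
  split <;> simp

variable {n m : Type*} [Fintype n] [Fintype m] [DecidableEq n] [DecidableEq m]

open scoped MatrixOrder

lemma conjT_kron (A : Matrix n n ℂ) (B : Matrix m m ℂ) : (A ⊗ₖ B)ᴴ = Aᴴ ⊗ₖ Bᴴ := by
  ext ⟨i, j⟩ ⟨k, l⟩
  simp [conjTranspose_apply, kroneckerMap_apply]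

lemma herm_kron {A : Matrix n n ℂ} {B : Matrix m m ℂ} (hA : A.IsHermitian)
    (hB : B.IsHermitian) : (A ⊗ₖ B).IsHermitian := by
  unfold Matrix.IsHermitian at *
  rw [conjT_kron, hA, hB]

lemma psd_kron {A : Matrix n n ℂ} {B : Matrix m m ℂ} (hA : A.PosSemidef)
    (hB : B.PosSemidef) : (A ⊗ₖ B).PosSemidef := by
  have h : A ⊗ₖ B = (CFC.sqrt A ⊗ₖ CFC.sqrt B)ᴴ * (CFC.sqrt A ⊗ₖ CFC.sqrt B) := by
    rw [conjT_kron, (CFC.sqrt_nonneg A).posSemidef.1.eq, (CFC.sqrt_nonneg B).posSemidef.1.eq,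
      ← mul_kronecker_mul, CFC.sqrt_mul_sqrt_self A hA.nonneg, CFC.sqrt_mul_sqrt_self B hB.nonneg]
  rw [h]
  exact posSemidef_conjTranspose_mul_self _

lemma psd_diag_nonneg {A : Matrix n n ℂ} (hA : A.PosSemidef) (i : n) : 0 ≤ A i i := by
  simpa [dotProduct, mulVec, Pi.single_apply] using hA.dotProduct_mulVec_nonneg (Pi.single i 1)

lemma psd_trace_nonneg {A : Matrix n n ℂ} (hA : A.PosSemidef) : 0 ≤ A.trace :=
  Finset.sum_nonneg fun i _ => psd_diag_nonneg hA i

lemma psd_trace_mul_nonneg {A B : Matrix n n ℂ} (hA : A.PosSemidef) (hB : B.PosSemidef) :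
    0 ≤ (A * B).trace := by
  have h : A * B = CFC.sqrt A * (CFC.sqrt A * B) := by
    rw [← mul_assoc, CFC.sqrt_mul_sqrt_self A hA.nonneg]
  rw [h, trace_mul_comm]
  have h2 := hB.mul_mul_conjTranspose_same (CFC.sqrt A)
  rw [(CFC.sqrt_nonneg A).posSemidef.1.eq] at h2
  exact psd_trace_nonneg h2

lemma psd_trace_re_pos {A : Matrix n n ℂ} (hA : A.PosSemidef) (h0 : A ≠ 0) : 0 < A.trace.re := by
  have hnn := psd_trace_nonneg hA
  rcases Complex.nonneg_iff.mp hnn with ⟨hre, him⟩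
  rcases hre.lt_or_eq with h | h
  · exact h
  · exfalso
    apply h0
    have htr : A.trace = 0 := Complex.ext h.symm him.symm
    have hS : (CFC.sqrt A)ᴴ * CFC.sqrt A = A := by
      rw [(CFC.sqrt_nonneg A).posSemidef.1.eq, CFC.sqrt_mul_sqrt_self A hA.nonneg]
    have hexp : ((CFC.sqrt A)ᴴ * CFC.sqrt A).trace
        = ∑ j : n, dotProduct (star fun i => CFC.sqrt A i j) (fun i => CFC.sqrt A i j) := by
      simp [trace, Matrix.diag, mul_apply, dotProduct, conjTranspose_apply]
    have hsum : ∑ j : n, dotProduct (star fun i => CFC.sqrt A i j) (fun i => CFC.sqrt A i j) = 0 := by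
      rw [← hexp, hS, htr]
    have hz := (Finset.sum_eq_zero_iff_of_nonneg
      (fun j _ => dotProduct_star_self_nonneg _)).mp hsum
    have hS0 : CFC.sqrt A = 0 := by
      ext i j
      have := dotProduct_star_self_eq_zero.mp (hz j (Finset.mem_univ j))
      exact congr_fun this i
    rw [← hS, hS0]
    simp

lemma herm_quad_real {A : Matrix n n ℂ} (hA : A.IsHermitian) (x : n → ℂ) :
    (dotProduct (star x) (A *ᵥ x)).im = 0 := by
  have h : (starRingEnd ℂ) (dotProduct (star x) (A *ᵥ x)) = dotProduct (star x) (A *ᵥ x) := by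
    calc (starRingEnd ℂ) (dotProduct (star x) (A *ᵥ x))
        = star (dotProduct (star x) (A *ᵥ x)) := rfl
      _ = dotProduct (star (A *ᵥ x)) x := by rw [star_dotProduct]; simp
      _ = dotProduct (Aᴴ.vecMul (star x)) x := by rw [star_mulVec]
      _ = dotProduct (star x) (Aᴴ *ᵥ x) := by rw [← dotProduct_mulVec]
      _ = dotProduct (star x) (A *ᵥ x) := by rw [hA.eq]
  exact Complex.conj_eq_iff_im.mp h

lemma psd_one_add {W : Matrix n n ℂ} (hW : W.IsHermitian) (h : opNorm W ≤ 1) :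
    (1 + W).PosSemidef := by
  refine PosSemidef.of_dotProduct_mulVec_nonneg (Matrix.isHermitian_one.add hW) fun x => ?_
  rw [add_mulVec, one_mulVec, dotProduct_add]
  have habs : ‖(dotProduct (star x) (W *ᵥ x))‖ ≤ (dotProduct (star x) x).re := by
    set y : EuclideanSpace ℂ n := (WithLp.equiv 2 (n → ℂ)).symm x with hy
    have e1 : dotProduct (star x) (W *ᵥ x)
        = @inner ℂ _ _ y ((Matrix.toEuclideanCLM (𝕜 := ℂ) W) y) := by
      rw [EuclideanSpace.inner_eq_star_dotProduct, dotProduct_comm]; rfl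
    have e2 : dotProduct (star x) x = @inner ℂ _ _ y y := by
      rw [EuclideanSpace.inner_eq_star_dotProduct, dotProduct_comm]; rfl
    rw [e1, e2]
    calc ‖(@inner ℂ _ _ y ((Matrix.toEuclideanCLM (𝕜 := ℂ) W) y))‖
        = ‖@inner ℂ _ _ y ((Matrix.toEuclideanCLM (𝕜 := ℂ) W) y)‖ := rfl
      _ ≤ ‖y‖ * ‖(Matrix.toEuclideanCLM (𝕜 := ℂ) W) y‖ := norm_inner_le_norm _ _
      _ ≤ ‖y‖ * (‖Matrix.toEuclideanCLM (𝕜 := ℂ) W‖ * ‖y‖) := by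
          gcongr
          exact (Matrix.toEuclideanCLM (𝕜 := ℂ) W).le_opNorm y
      _ ≤ ‖y‖ * (1 * ‖y‖) := by
          gcongr
          exact h
      _ = (@inner ℂ _ _ y y).re := by
          rw [inner_self_eq_norm_sq_to_K (𝕜 := ℂ)]
          simp [sq]
  rw [Complex.nonneg_iff]
  constructor
  · rw [Complex.add_re]
    have h1 : |(dotProduct (star x) (W *ᵥ x)).re| ≤ ‖(dotProduct (star x) (W *ᵥ x))‖ :=
      Complex.abs_re_le_norm _
    linarith [abs_le.mp (le_trans h1 habs)]
  · have h1 := herm_quad_real (Matrix.isHermitian_one : (1 : Matrix n n ℂ).IsHermitian) x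
    rw [one_mulVec] at h1
    rw [Complex.add_im, h1, herm_quad_real hW x]
    norm_num

lemma psd_one_sub {W : Matrix n n ℂ} (hW : W.IsHermitian) (h : opNorm W ≤ 1) :
    (1 - W).PosSemidef := by
  have hn : opNorm (-W) ≤ 1 := by
    unfold opNorm at *
    rw [map_neg, norm_neg]
    exact h
  have := psd_one_add hW.neg hn
  rwa [← sub_eq_add_neg] at this

lemma split_pos_neg {A : Matrix n n ℂ} (hA : A.IsHermitian) :
    ∃ P Q : Matrix n n ℂ, P.PosSemidef ∧ Q.PosSemidef ∧ A = P - Q ∧ (P + Q) ^ 2 = A ^ 2 := by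
  classical
  set V : Matrix n n ℂ := (hA.eigenvectorUnitary : Matrix n n ℂ) with hV
  set D : n → ℝ := hA.eigenvalues with hD
  have hUV : star V * V = 1 := Matrix.mem_unitaryGroup_iff'.mp hA.eigenvectorUnitary.2
  have hsq : ∀ E : Matrix n n ℂ, (V * E * star V) ^ 2 = V * (E * E) * star V := by
    intro E
    have h1 : star V * (V * (E * star V)) = E * star V := by
      rw [← Matrix.mul_assoc, hUV, Matrix.one_mul]
    calc (V * E * star V) ^ 2 = V * (E * (star V * (V * (E * star V)))) := by
          rw [pow_two]; simp only [Matrix.mul_assoc]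
      _ = V * (E * (E * star V)) := by rw [h1]
      _ = V * (E * E) * star V := by simp only [Matrix.mul_assoc]
  have hpsd : ∀ f : n → ℝ, (0 ≤ f) →
      (V * diagonal (fun i => (f i : ℂ)) * star V).PosSemidef := by
    intro f hf
    have hd : Matrix.PosSemidef (diagonal (fun i => (f i : ℂ))) := by
      refine Matrix.PosSemidef.diagonal fun i => ?_
      simpa using Complex.zero_le_real.mpr (hf i)
    have := hd.mul_mul_conjTranspose_same V
    rwa [← Matrix.star_eq_conjTranspose] at this
  refine ⟨V * diagonal (fun i => ((max (D i) 0 : ℝ) : ℂ)) * star V,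
    V * diagonal (fun i => ((max (-D i) 0 : ℝ) : ℂ)) * star V,
    hpsd _ (fun i => le_max_right _ _), hpsd _ (fun i => le_max_right _ _), ?_, ?_⟩
  · have hAspec : A = V * diagonal (RCLike.ofReal ∘ D) * star V := hA.spectral_theorem
    have hfun : (RCLike.ofReal ∘ D : n → ℂ)
        = fun i => ((max (D i) 0 : ℝ) : ℂ) - ((max (-D i) 0 : ℝ) : ℂ) := by
      funext i
      rw [← Complex.ofReal_sub, max_zero_sub_max_neg_zero_eq_self]
      rfl
    rw [hAspec, ← Matrix.sub_mul, ← Matrix.mul_sub, Matrix.diagonal_sub, hfun]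
  · have hAspec : A = V * diagonal (RCLike.ofReal ∘ D) * star V := hA.spectral_theorem
    have hfun : (fun i => (((max (D i) 0 : ℝ) : ℂ) + ((max (-D i) 0 : ℝ) : ℂ))
          * (((max (D i) 0 : ℝ) : ℂ) + ((max (-D i) 0 : ℝ) : ℂ)))
        = fun i => (RCLike.ofReal ∘ D) i * (RCLike.ofReal ∘ D) i := by
      funext i
      have habs : max (D i) 0 + max (-D i) 0 = |D i| := by
        rcases le_total (D i) 0 with hle | hle
        · rw [max_eq_right hle, max_eq_left (by linarith), abs_of_nonpos hle]; ring
        · rw [max_eq_left hle, max_eq_right (by linarith), abs_of_nonneg hle]; ring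
      rw [← Complex.ofReal_add, habs, ← Complex.ofReal_mul, abs_mul_abs_self]
      simp [RCLike.ofReal]
    rw [hAspec, hsq, ← Matrix.add_mul, ← Matrix.mul_add, Matrix.diagonal_add, hsq,
      Matrix.diagonal_mul_diagonal, Matrix.diagonal_mul_diagonal, hfun]

lemma herm_trace_mul_real {A B : Matrix n n ℂ} (hA : A.IsHermitian) (hB : B.IsHermitian) :
    ((A * B).trace).im = 0 := by
  have h : (starRingEnd ℂ) ((A * B).trace) = (A * B).trace := by
    calc (starRingEnd ℂ) ((A * B).trace) = star ((A * B).trace) := rfl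
      _ = ((A * B)ᴴ).trace := (Matrix.trace_conjTranspose _).symm
      _ = (Bᴴ * Aᴴ).trace := by rw [Matrix.conjTranspose_mul]
      _ = (B * A).trace := by rw [hA.eq, hB.eq]
      _ = (A * B).trace := Matrix.trace_mul_comm _ _
  exact Complex.conj_eq_iff_im.mp h

lemma psd_smul_half {A : Matrix n n ℂ} (hA : A.PosSemidef) : ((2 : ℂ)⁻¹ • A).PosSemidef := by
  refine PosSemidef.of_dotProduct_mulVec_nonneg ?_ ?_
  · unfold Matrix.IsHermitian
    rw [conjTranspose_smul, hA.1.eq]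
    congr 1
    simp [starRingEnd]
  · intro x
    have h := hA.dotProduct_mulVec_nonneg x
    have : dotProduct (star x) (((2 : ℂ)⁻¹ • A) *ᵥ x)
        = (2 : ℂ)⁻¹ * dotProduct (star x) (A *ᵥ x) := by
      rw [smul_mulVec, dotProduct_smul, smul_eq_mul]
    rw [this]
    have h2 : (0 : ℂ) ≤ (2 : ℂ)⁻¹ := by
      rw [Complex.nonneg_iff]
      norm_num
    exact mul_nonneg h2 h

lemma psd_eq_of_sq {A B : Matrix n n ℂ} (hA : A.PosSemidef) (hB : B.PosSemidef)
    (h : A ^ 2 = B ^ 2) : A = B := by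
  rw [← CFC.sqrt_sq A hA.nonneg, h, CFC.sqrt_sq B hB.nonneg]

section TraceDuality
variable {α β γ : Type*} [Fintype α] [Fintype β] [Fintype γ]
  [DecidableEq α] [DecidableEq β] [DecidableEq γ]

lemma trace_ptr3_mul (T : Matrix ((α × β) × γ) ((α × β) × γ) ℂ) (M : Matrix (α × β) (α × β) ℂ) :
    (ptr3 T * M).trace = (T * (M ⊗ₖ (1 : Matrix γ γ ℂ))).trace := by
  simp only [trace, diag_apply, mul_apply, ptr3, kroneckerMap_apply, one_apply, mul_ite, mul_one,
    mul_zero, Fintype.sum_prod_type, Finset.sum_ite_eq, Finset.sum_ite_eq',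
    Finset.mem_univ, if_true, Finset.sum_mul, sum_ite_const]
  exact Finset.sum_congr rfl fun x _ => Finset.sum_congr rfl fun y _ => sumc3 _

lemma trace_ptr2_mul (T : Matrix ((α × β) × γ) ((α × β) × γ) ℂ)
    (W : Matrix α α ℂ) (B : Matrix γ γ ℂ) :
    (ptr2 T * (W ⊗ₖ B)).trace = (T * ((W ⊗ₖ (1 : Matrix β β ℂ)) ⊗ₖ B)).trace := by
  simp only [trace, diag_apply, mul_apply, ptr2, kroneckerMap_apply, one_apply, mul_ite, ite_mul,
    mul_one, one_mul, mul_zero, zero_mul, Fintype.sum_prod_type, Finset.sum_ite_eq,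
    Finset.sum_ite_eq', Finset.mem_univ, if_true, Finset.sum_mul, sum_ite_const]
  exact Finset.sum_congr rfl fun x _ => sumc4 _

lemma trace_ptr1_mul (T : Matrix ((α × β) × γ) ((α × β) × γ) ℂ)
    (B₁ : Matrix β β ℂ) (B₂ : Matrix γ γ ℂ) :
    (ptr1 T * (B₁ ⊗ₖ B₂)).trace = (T * (((1 : Matrix α α ℂ) ⊗ₖ B₁) ⊗ₖ B₂)).trace := by
  simp only [trace, diag_apply, mul_apply, ptr1, kroneckerMap_apply, one_apply, mul_ite, ite_mul,
    mul_one, one_mul, mul_zero, zero_mul, Fintype.sum_prod_type, Finset.sum_ite_eq,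
    Finset.sum_ite_eq', Finset.mem_univ, if_true, Finset.sum_mul, sum_ite_const]
  exact sumc5 _

end TraceDuality

section KeyDecomp
variable {α β γ : Type*} [Fintype α] [Fintype β] [Fintype γ]
  [DecidableEq α] [DecidableEq β] [DecidableEq γ]

lemma key_decomp_sub (W : Matrix α α ℂ) (B₁ : Matrix β β ℂ) (B₂ : Matrix γ γ ℂ) :
    ((1 : Matrix α α ℂ) ⊗ₖ (1 : Matrix β β ℂ)) ⊗ₖ (1 : Matrix γ γ ℂ)
      - ((1 : Matrix α α ℂ) ⊗ₖ B₁) ⊗ₖ B₂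
      - ((W ⊗ₖ B₁) ⊗ₖ (1 : Matrix γ γ ℂ) - (W ⊗ₖ (1 : Matrix β β ℂ)) ⊗ₖ B₂)
    = (((2 : ℂ)⁻¹ • (1 + W)) ⊗ₖ (1 - B₁)) ⊗ₖ (1 + B₂)
      + (((2 : ℂ)⁻¹ • (1 - W)) ⊗ₖ (1 + B₁)) ⊗ₖ (1 - B₂) := by
  ext ⟨⟨i, j⟩, k⟩ ⟨⟨i', j'⟩, k'⟩
  simp only [Matrix.add_apply, Matrix.sub_apply, Matrix.smul_apply, kroneckerMap_apply,
    Matrix.one_apply, smul_eq_mul]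
  ring

lemma key_decomp_add (W : Matrix α α ℂ) (B₁ : Matrix β β ℂ) (B₂ : Matrix γ γ ℂ) :
    ((1 : Matrix α α ℂ) ⊗ₖ (1 : Matrix β β ℂ)) ⊗ₖ (1 : Matrix γ γ ℂ)
      - ((1 : Matrix α α ℂ) ⊗ₖ B₁) ⊗ₖ B₂
      + ((W ⊗ₖ B₁) ⊗ₖ (1 : Matrix γ γ ℂ) - (W ⊗ₖ (1 : Matrix β β ℂ)) ⊗ₖ B₂)
    = (((2 : ℂ)⁻¹ • (1 - W)) ⊗ₖ (1 - B₁)) ⊗ₖ (1 + B₂)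
      + (((2 : ℂ)⁻¹ • (1 + W)) ⊗ₖ (1 + B₁)) ⊗ₖ (1 - B₂) := by
  ext ⟨⟨i, j⟩, k⟩ ⟨⟨i', j'⟩, k'⟩
  simp only [Matrix.add_apply, Matrix.sub_apply, Matrix.smul_apply, kroneckerMap_apply,
    Matrix.one_apply, smul_eq_mul]
  ring

end KeyDecomp

end AuxLemmas

/-- the quantum Bell-form inequality (20) with a source-operator of type
`T₁₂₂`. `Tabs` is the absolute value |T| (the PSD square root of T²), `Tabs.trace` the
trace norm ‖T‖₁ and `(Tabs.trace)⁻¹ • ptr1 Tabs` the density matrix `σ_T`. -/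
theorem bell_form_inequality_122 {d₁ d₂ : ℕ}
    (ρ : Matrix (Fin d₁ × Fin d₂) (Fin d₁ × Fin d₂) ℂ) (hρ : IsDensityMatrix ρ)
    (T Tabs : Matrix ((Fin d₁ × Fin d₂) × Fin d₂) ((Fin d₁ × Fin d₂) × Fin d₂) ℂ)
    (hT : IsSource122 ρ T) (hT0 : T ≠ 0)
    (habs : Tabs.PosSemidef ∧ Tabs * Tabs = T * T)
    (W₁ : Matrix (Fin d₁) (Fin d₁) ℂ) (B₁ B₂ : Matrix (Fin d₂) (Fin d₂) ℂ)
    (hW₁ : W₁.IsHermitian) (hB₁ : B₁.IsHermitian) (hB₂ : B₂.IsHermitian)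
    (hnW₁ : opNorm W₁ ≤ 1) (hnB₁ : opNorm B₁ ≤ 1) (hnB₂ : opNorm B₂ ≤ 1) :
    ‖(ρ * (W₁ ⊗ₖ B₁)).trace - (ρ * (W₁ ⊗ₖ B₂)).trace‖
      ≤ Tabs.trace.re *
        (1 - (((Tabs.trace)⁻¹ • ptr1 Tabs * (B₁ ⊗ₖ B₂)).trace).re) := by
  classical
  obtain ⟨hTherm, hptr2T, hptr3T⟩ := hT
  obtain ⟨habsPSD, habsSq⟩ := habs
  set d2 := (1 : Matrix (Fin d₂) (Fin d₂) ℂ)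
  set d1 := (1 : Matrix (Fin d₁) (Fin d₁) ℂ)
  set X₁ := (W₁ ⊗ₖ B₁) ⊗ₖ d2 with hX₁
  set X₂ := (W₁ ⊗ₖ d2) ⊗ₖ B₂ with hX₂
  set G := (d1 ⊗ₖ d2) ⊗ₖ d2 - (d1 ⊗ₖ B₁) ⊗ₖ B₂ with hG
  have e₁ : (ρ * (W₁ ⊗ₖ B₁)).trace = (T * X₁).trace := by
    rw [← hptr3T]; exact trace_ptr3_mul T _
  have e₂ : (ρ * (W₁ ⊗ₖ B₂)).trace = (T * X₂).trace := by
    rw [← hptr2T]; exact trace_ptr2_mul T W₁ B₂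
  obtain ⟨P, Q, hP, hQ, hPQ, hPQsq⟩ := split_pos_neg hTherm
  have hTabs : Tabs = P + Q := by
    refine psd_eq_of_sq habsPSD (hP.add hQ) ?_
    rw [hPQsq, pow_two, pow_two, habsSq]
  have hGsub : (G - (X₁ - X₂)).PosSemidef := by
    rw [hG, hX₁, hX₂]
    rw [key_decomp_sub W₁ B₁ B₂]
    exact ((psd_kron (psd_kron (psd_smul_half (psd_one_add hW₁ hnW₁))
        (psd_one_sub hB₁ hnB₁)) (psd_one_add hB₂ hnB₂))).add
      (psd_kron (psd_kron (psd_smul_half (psd_one_sub hW₁ hnW₁))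
        (psd_one_add hB₁ hnB₁)) (psd_one_sub hB₂ hnB₂))
  have hGadd : (G + (X₁ - X₂)).PosSemidef := by
    rw [hG, hX₁, hX₂]
    rw [key_decomp_add W₁ B₁ B₂]
    exact ((psd_kron (psd_kron (psd_smul_half (psd_one_sub hW₁ hnW₁))
        (psd_one_sub hB₁ hnB₁)) (psd_one_add hB₂ hnB₂))).add
      (psd_kron (psd_kron (psd_smul_half (psd_one_add hW₁ hnW₁))
        (psd_one_add hB₁ hnB₁)) (psd_one_sub hB₂ hnB₂))
  have hb : ∀ R : Matrix ((Fin d₁ × Fin d₂) × Fin d₂) ((Fin d₁ × Fin d₂) × Fin d₂) ℂ,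
      R.PosSemidef → |((R * (X₁ - X₂)).trace).re| ≤ ((R * G).trace).re := by
    intro R hR
    have h1 := psd_trace_mul_nonneg hR hGsub
    have h2 := psd_trace_mul_nonneg hR hGadd
    rw [mul_sub, trace_sub, Complex.nonneg_iff] at h1
    rw [mul_add, trace_add, Complex.nonneg_iff] at h2
    have h1' := h1.1
    have h2' := h2.1
    rw [Complex.sub_re] at h1'
    rw [Complex.add_re] at h2'
    rw [abs_le]
    constructor <;> linarith
  have hbP := hb P hP
  have hbQ := hb Q hQ
  have habs_bound : |((T * (X₁ - X₂)).trace).re| ≤ ((Tabs * G).trace).re := by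
    have hzsum : ((T * (X₁ - X₂)).trace) = (P * (X₁ - X₂)).trace - (Q * (X₁ - X₂)).trace := by
      rw [hPQ, Matrix.sub_mul, trace_sub]
    have hTsum : ((Tabs * G).trace) = (P * G).trace + (Q * G).trace := by
      rw [hTabs, Matrix.add_mul, trace_add]
    rw [hzsum, hTsum, Complex.sub_re, Complex.add_re, abs_le]
    have p1 := (abs_le.mp hbP).1
    have p2 := (abs_le.mp hbP).2
    have q1 := (abs_le.mp hbQ).1
    have q2 := (abs_le.mp hbQ).2
    constructor <;> linarith
  -- the difference of traces is real
  have hX₁herm : X₁.IsHermitian := herm_kron (herm_kron hW₁ hB₁) Matrix.isHermitian_one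
  have hX₂herm : X₂.IsHermitian := herm_kron (herm_kron hW₁ Matrix.isHermitian_one) hB₂
  have hzim : ((T * (X₁ - X₂)).trace).im = 0 :=
    herm_trace_mul_real hTherm (hX₁herm.sub hX₂herm)
  have hlhs : ‖(ρ * (W₁ ⊗ₖ B₁)).trace - (ρ * (W₁ ⊗ₖ B₂)).trace‖
      = |((T * (X₁ - X₂)).trace).re| := by
    rw [e₁, e₂, ← trace_sub, ← Matrix.mul_sub]
    have hz : (T * (X₁ - X₂)).trace = (((T * (X₁ - X₂)).trace).re : ℂ) :=
      Complex.ext rfl (by simp [hzim])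
    rw [hz, Complex.norm_real, Real.norm_eq_abs, Complex.ofReal_re]
  -- nonzero trace
  have hTabs0 : Tabs ≠ 0 := by
    intro h0
    apply hT0
    have hTT : Tᴴ * T = 0 := by
      rw [hTherm.eq, ← habsSq, h0, mul_zero]
    exact conjTranspose_mul_self_eq_zero.mp hTT
  have ht : 0 < Tabs.trace.re := psd_trace_re_pos habsPSD hTabs0
  have htim : Tabs.trace.im = 0 := by
    have := herm_trace_mul_real habsPSD.1
      (Matrix.isHermitian_one :
        (1 : Matrix ((Fin d₁ × Fin d₂) × Fin d₂) ((Fin d₁ × Fin d₂) × Fin d₂) ℂ).IsHermitian)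
    rwa [mul_one] at this
  have htreal : Tabs.trace = (Tabs.trace.re : ℂ) := Complex.ext rfl (by simp [htim])
  -- compute (Tabs * G).trace
  have hTG : ((Tabs * G).trace) = Tabs.trace - (ptr1 Tabs * (B₁ ⊗ₖ B₂)).trace := by
    rw [hG, Matrix.mul_sub, trace_sub]
    congr 1
    · rw [Matrix.one_kronecker_one, Matrix.one_kronecker_one, mul_one]
    · exact (trace_ptr1_mul Tabs B₁ B₂).symm
  -- compute the RHS
  have hrhs : Tabs.trace.re * (1 - (((Tabs.trace)⁻¹ • ptr1 Tabs * (B₁ ⊗ₖ B₂)).trace).re)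
      = ((Tabs * G).trace).re := by
    rw [Matrix.smul_mul, trace_smul, hTG, Complex.sub_re]
    have : ((Tabs.trace)⁻¹ • (ptr1 Tabs * (B₁ ⊗ₖ B₂)).trace).re
        = (Tabs.trace.re)⁻¹ * ((ptr1 Tabs * (B₁ ⊗ₖ B₂)).trace).re := by
      rw [smul_eq_mul, htreal, ← Complex.ofReal_inv, Complex.re_ofReal_mul]
      simp
    rw [this]
    field_simp
  rw [hlhs, hrhs]
  exact habs_bound

end BellPaper
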